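/- Let H be a nonzero additive subgroup of ℚ, K a nonzero torsion-free abelian group of finite rank, and G = H × K with positive cone G⁺ = {(h,k) : h > 0} ∪ {(0,0)}. Let k₁′, …, k_n′ be a maximal ℤ-linearly independent family in K and let h′ ∈ H with h′ > 0. Suppose (h₀,k₀), …, (h_n,k_n) ∈ G⁺ are ℤ-linearly independent and each of the 2n+1 elements (h′,0), (h′,k₁′), …, (h′,k_n′), (h′,−k₁′), …, (h′,−k_n′) is a sum of the (hᵢ,kᵢ) with nonnegative integer coefficients. Let h̄ ∈ H with h̄ > 0 be such that the subgroup of H generated by h₀, …, h_n equals the subgroup generated by h̄, and let k̄₁, …, k̄_n ∈ K be ℤ-linearly independent with the subgroup of K generated by k₀, …, k_n equal to the subgroup generated by k̄₁, …, k̄_n. Write hᵢ = aᵢ·h̄ with aᵢ ∈ ℤ and kᵢ = Σ_{j=1}^n b_{ij}·k̄ⱼ with b_{ij} ∈ ℤ, for 0 ≤ i ≤ n. Then the (n+1)×(n+1) integer matrix A whose i-th row is (aᵢ, b_{i1}, …, b_{in}) satisfies |det(A)| > 1. -/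

import Mathlib

open TensorProduct

lemma det_ne_zero_of_int_rows {m : ℕ} (M : Matrix (Fin m) (Fin m) ℤ)
    (hr : ∀ t : Fin m → ℤ, (∀ j, ∑ i, t i * M i j = 0) → t = 0) : M.det ≠ 0 := by
  intro hdet
  obtain ⟨v, hv0, hv⟩ := Matrix.exists_vecMul_eq_zero_iff.mpr hdet
  exact hv0 (hr v fun j => by
    simpa [Matrix.vecMul, dotProduct] using congrFun hv j)

set_option maxHeartbeats 1000000 in
theorem statement8
    (H : AddSubgroup ℚ) (hH : H ≠ ⊥)
    (K : Type*) [AddCommGroup K] [NoZeroSMulDivisors ℤ K] [Nontrivial K]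
    [Module.Finite ℚ (ℚ ⊗[ℤ] K)]
    (n : ℕ) (k' : Fin n → K)
    (hind : LinearIndependent ℤ k')
    (hmax : ∀ x : K, ∃ c : ℤ, c ≠ 0 ∧ c • x ∈ Submodule.span ℤ (Set.range k'))
    (h' : H) (hh' : 0 < (h' : ℚ))
    (h : Fin (n + 1) → H) (k : Fin (n + 1) → K)
    (hpos : ∀ i, ((h i, k i) : H × K) ∈ ({g : H × K | 0 < (g.1 : ℚ)} ∪ {0}))
    (hindG : LinearIndependent ℤ (fun i : Fin (n + 1) => ((h i, k i) : H × K)))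
    (hcomb : ∀ f ∈ ({((h' : H), (0 : K))}
          ∪ (Set.range fun i : Fin n => ((h' : H), k' i))
          ∪ (Set.range fun i : Fin n => ((h' : H), -(k' i))) : Set (H × K)),
        ∃ c : Fin (n + 1) → ℕ, f = ∑ i, c i • ((h i, k i) : H × K))
    (hbar : H) (hhbar : 0 < (hbar : ℚ))
    (hgenH : AddSubgroup.closure (Set.range h) = AddSubgroup.closure {hbar})
    (kbar : Fin n → K) (hkbarind : LinearIndependent ℤ kbar)
    (hgenK : AddSubgroup.closure (Set.range k) = AddSubgroup.closure (Set.range kbar))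
    (a : Fin (n + 1) → ℤ) (ha : ∀ i, h i = a i • hbar)
    (b : Fin (n + 1) → Fin n → ℤ) (hb : ∀ i, k i = ∑ j, b i j • kbar j) :
    1 < |(Matrix.of fun i j : Fin (n + 1) =>
        if hj : j = 0 then a i else b i (j.pred hj)).det| := by
  classical
  -- n ≥ 1
  have hn : 0 < n := by
    rcases Nat.eq_zero_or_pos n with hn0 | hn0
    · exfalso
      subst hn0
      obtain ⟨x, hx⟩ := exists_ne (0 : K)
      obtain ⟨c, hc0, hcx⟩ := hmax x
      rw [Set.range_eq_empty, Submodule.span_empty, Submodule.mem_bot] at hcx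
      rcases smul_eq_zero.mp hcx with hc | hcc
      · exact hc0 (by exact_mod_cast hc)
      · exact hx hcc
    · exact hn0
  set A : Matrix (Fin (n+1)) (Fin (n+1)) ℤ :=
    Matrix.of (fun i j : Fin (n + 1) =>
      if hj : j = 0 then a i else b i (j.pred hj)) with hAdef
  have hA0 : ∀ i, A i 0 = a i := fun i => by simp [hAdef]
  have hAs : ∀ i (j : Fin n), A i j.succ = b i j := fun i j => by
    simp [hAdef, Fin.succ_ne_zero]
  set μ : Fin (n+1) → ℤ := fun i => A.adjugate 0 i with hμdef
  have hadj : ∀ j, ∑ i, μ i * A i j = A.det * (if 0 = j then 1 else 0) := by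
    intro j
    have h00 : (A.adjugate * A) 0 j = (A.det • (1 : Matrix (Fin (n+1)) (Fin (n+1)) ℤ)) 0 j := by
      rw [Matrix.adjugate_mul]
    simpa [Matrix.mul_apply, Matrix.one_apply] using h00
  have hμa : ∑ i, μ i * a i = A.det := by
    have h0 := hadj 0
    simp only [hA0] at h0
    simpa using h0
  have hμb : ∀ j : Fin n, ∑ i, μ i * b i j = 0 := by
    intro j
    have hj := hadj j.succ
    rw [if_neg (Fin.succ_ne_zero j).symm, mul_zero] at hj
    simpa only [hAs] using hj
  -- sums in H and K
  have haveK : ∀ t : Fin (n+1) → ℤ,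
      (∑ i, t i • k i) = ∑ j, (∑ i, t i * b i j) • kbar j := by
    intro t
    simp_rw [hb, Finset.smul_sum, smul_smul]
    rw [Finset.sum_comm]
    simp_rw [← Finset.sum_smul]
  have hcoeh : ∀ i, ((h i : ℚ)) = (a i : ℚ) * (hbar : ℚ) := by
    intro i
    rw [ha i]
    push_cast [zsmul_eq_mul]
    ring
  have haveH : ∀ t : Fin (n+1) → ℤ,
      ((∑ i, t i • h i : H) : ℚ) = ((∑ i, t i * a i : ℤ) : ℚ) * (hbar : ℚ) := by
    intro t
    push_cast [zsmul_eq_mul]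
    simp_rw [hcoeh, Finset.sum_mul, mul_assoc]
  have hsplit : ∀ t : Fin (n+1) → ℤ,
      ∑ i, t i • ((h i, k i) : H × K) = (∑ i, t i • h i, ∑ i, t i • k i) := by
    intro t
    rw [Prod.ext_iff]
    constructor
    · rw [show (∑ i, t i • ((h i, k i) : H × K)).1
        = (AddMonoidHom.fst H K) (∑ i, t i • ((h i, k i) : H × K)) from rfl, map_sum]
      simp
    · rw [show (∑ i, t i • ((h i, k i) : H × K)).2
        = (AddMonoidHom.snd H K) (∑ i, t i • ((h i, k i) : H × K)) from rfl, map_sum]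
      simp
  have hKind : ∀ e : Fin n → ℤ, ∑ j, e j • kbar j = 0 → ∀ j, e j = 0 :=
    Fintype.linearIndependent_iff.mp hkbarind
  have hGind : ∀ g : Fin (n+1) → ℤ, ∑ i, g i • ((h i, k i) : H × K) = 0 → ∀ i, g i = 0 :=
    Fintype.linearIndependent_iff.mp hindG
  have hkind : ∀ e : Fin n → ℤ, ∑ j, e j • k' j = 0 → ∀ j, e j = 0 :=
    Fintype.linearIndependent_iff.mp hind
  -- det A ≠ 0
  have hd0 : A.det ≠ 0 := by
    apply det_ne_zero_of_int_rows
    intro t ht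
    funext i
    refine hGind t ?_ i
    have h1 : ∑ i, t i * a i = 0 := by simpa only [hA0] using ht 0
    have h2 : ∀ j : Fin n, ∑ i, t i * b i j = 0 := fun j => by
      simpa only [hAs] using ht j.succ
    have hfst : (∑ i, t i • h i : H) = 0 := by
      have hq := haveH t
      rw [h1] at hq
      simp only [Int.cast_zero, zero_mul] at hq
      exact Subtype.ext (by simpa using hq)
    have hsnd : (∑ i, t i • k i) = 0 := by
      rw [haveK t]
      simp only [h2]
      simp
    rw [hsplit t, hfst, hsnd]
    rfl
  -- extraction of coefficient data
  have extract : ∀ (x : H) (y : K) (c : Fin (n+1) → ℕ),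
      ((x, y) : H × K) = ∑ i, c i • ((h i, k i) : H × K) →
      ((x : ℚ) = ((∑ i, (c i : ℤ) * a i : ℤ) : ℚ) * (hbar : ℚ)
       ∧ y = ∑ j, (∑ i, (c i : ℤ) * b i j) • kbar j) := by
    intro x y c hc
    have hc' : ((x, y) : H × K) = ∑ i, ((c i : ℤ)) • ((h i, k i) : H × K) := by
      rw [hc]; simp [natCast_zsmul]
    rw [hsplit, Prod.mk.injEq] at hc'
    constructor
    · rw [hc'.1]
      exact haveH _
    · rw [hc'.2]
      exact haveK _
  -- the three families of coefficients
  obtain ⟨c0, hc0⟩ := hcomb ((h' : H), (0 : K)) (by left; left; rfl)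
  have hcpall : ∀ j : Fin n, ∃ c : Fin (n+1) → ℕ,
      ((h' : H), k' j) = ∑ i, c i • ((h i, k i) : H × K) :=
    fun j => hcomb _ (by left; right; exact ⟨j, rfl⟩)
  have hcmall : ∀ j : Fin n, ∃ c : Fin (n+1) → ℕ,
      ((h' : H), -(k' j)) = ∑ i, c i • ((h i, k i) : H × K) :=
    fun j => hcomb _ (by right; exact ⟨j, rfl⟩)
  choose cp hcp using hcpall
  choose cm hcm using hcmall
  obtain ⟨hc0a, hc0b⟩ := extract _ _ _ hc0
  have hcpe := fun j => extract _ _ _ (hcp j)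
  have hcme := fun j => extract _ _ _ (hcm j)
  -- positivity of h i and a i
  have hhipos : ∀ i, 0 < ((h i : ℚ)) := by
    intro i
    rcases hpos i with hp | hp
    · exact hp
    · exfalso
      exact hindG.ne_zero i (by simpa using hp)
  have hapos : ∀ i, 0 < a i := by
    intro i
    have hq := hcoeh i
    have h2 : (0:ℚ) < (a i : ℚ) * (hbar : ℚ) := hq ▸ hhipos i
    have : (0:ℚ) < (a i : ℚ) := by nlinarith
    exact_mod_cast this
  -- the key linear-algebra identity
  have hdq : ((A.det : ℚ)) ≠ 0 := Int.cast_ne_zero.mpr hd0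
  have key : ∀ v : Fin (n+1) → ℚ, (∀ j : Fin n, ∑ i, v i * (b i j : ℚ) = 0) →
      ∀ i, (A.det : ℚ) * v i = (∑ i, v i * (a i : ℚ)) * (μ i : ℚ) := by
    intro v hv
    set s : ℚ := ∑ i, v i * (a i : ℚ) with hs
    set w : Fin (n+1) → ℚ := fun i => (A.det : ℚ) * v i - s * (μ i : ℚ) with hw
    have hwA : ∀ j, ∑ i, w i * (A i j : ℚ) = 0 := by
      intro j
      refine Fin.cases ?_ ?_ j
      · simp only [hw, hA0]
        have e1 : ∑ i, ((A.det : ℚ) * v i - s * (μ i : ℚ)) * (a i : ℚ)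
            = (A.det : ℚ) * (∑ i, v i * (a i : ℚ)) - s * (∑ i, (μ i : ℚ) * (a i : ℚ)) := by
          rw [Finset.mul_sum, Finset.mul_sum, ← Finset.sum_sub_distrib]
          congr 1
          funext i
          ring
        rw [e1]
        have e2 : (∑ i, (μ i : ℚ) * (a i : ℚ)) = (A.det : ℚ) := by
          exact_mod_cast congrArg (Int.cast : ℤ → ℚ) hμa
        rw [e2, ← hs]
        ring
      · intro j'
        simp only [hw, hAs]
        have e1 : ∑ i, ((A.det : ℚ) * v i - s * (μ i : ℚ)) * (b i j' : ℚ)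
            = (A.det : ℚ) * (∑ i, v i * (b i j' : ℚ)) - s * (∑ i, (μ i : ℚ) * (b i j' : ℚ)) := by
          rw [Finset.mul_sum, Finset.mul_sum, ← Finset.sum_sub_distrib]
          congr 1
          funext i
          ring
        rw [e1, hv j']
        have e2 : (∑ i, (μ i : ℚ) * (b i j' : ℚ)) = 0 := by
          exact_mod_cast congrArg (Int.cast : ℤ → ℚ) (hμb j')
        rw [e2]
        ring
    have hwz : w = 0 := by
      by_contra hne
      have hex : ∃ w' ≠ 0, Matrix.vecMul w' (A.map (Int.cast : ℤ → ℚ)) = 0 := by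
        refine ⟨w, hne, ?_⟩
        funext j
        simpa [Matrix.vecMul, dotProduct, Matrix.map_apply] using hwA j
      have hdet0 := Matrix.exists_vecMul_eq_zero_iff.mp hex
      have hmapdet : (A.map (Int.cast : ℤ → ℚ)).det = ((A.det : ℚ)) := by
        rw [show (Int.cast : ℤ → ℚ) = ⇑(Int.castRingHom ℚ) from rfl]
        exact (RingHom.map_det (Int.castRingHom ℚ) A).symm
      rw [hmapdet] at hdet0
      exact hdq hdet0
    intro i
    have hwi := congrFun hwz i
    simp only [hw, Pi.zero_apply, sub_eq_zero] at hwi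
    exact hwi
  -- scalar positivity helper
  have hposσ : ∀ σ : ℤ, (h' : ℚ) = (σ : ℚ) * (hbar : ℚ) → 0 < (σ : ℚ) := by
    intro σ hσ
    nlinarith
  -- coefficient equations over ℚ
  have hc0btriv : ∀ j, ∑ i, (c0 i : ℤ) * b i j = 0 := hKind _ hc0b.symm
  have hs0pos : (0:ℚ) < ∑ i, (c0 i : ℚ) * (a i : ℚ) := by
    have h1 := hposσ _ hc0a
    have : ((∑ i, (c0 i : ℤ) * a i : ℤ) : ℚ) = ∑ i, (c0 i : ℚ) * (a i : ℚ) := by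
      push_cast
      rfl
    rw [this] at h1
    exact h1
  have hkey0 : ∀ i, (A.det : ℚ) * (c0 i : ℚ)
      = (∑ i, (c0 i : ℚ) * (a i : ℚ)) * (μ i : ℚ) :=
    key _ (fun j => by exact_mod_cast hc0btriv j)
  have hpm : ∀ j₀ j, ∑ i, ((cp j₀ i : ℤ) + (cm j₀ i : ℤ)) * b i j = 0 := by
    intro j₀ j
    have h1 := (hcpe j₀).2
    have h2 := (hcme j₀).2
    have h3 : (0:K) = ∑ jj, ((∑ i, (cp j₀ i : ℤ) * b i jj) + (∑ i, (cm j₀ i : ℤ) * b i jj)) • kbar jj := by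
      rw [show (0:K) = k' j₀ + -(k' j₀) by simp]
      rw [h2, h1, ← Finset.sum_add_distrib]
      congr 1
      funext jj
      rw [add_smul]
    have h4 := hKind _ h3.symm j
    rw [← Finset.sum_add_distrib] at h4
    simpa [add_mul] using h4
  have hkeyP : ∀ j₀ i, (A.det : ℚ) * ((cp j₀ i : ℚ) + (cm j₀ i : ℚ))
      = (∑ i, ((cp j₀ i : ℚ) + (cm j₀ i : ℚ)) * (a i : ℚ)) * (μ i : ℚ) :=
    fun j₀ => key _ (fun j => by exact_mod_cast hpm j₀ j)
  -- all cofactors are nonzero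
  have hμnz : ∀ i, μ i ≠ 0 := by
    intro i₀ hμ0
    obtain ⟨i₁, hμ1⟩ : ∃ i₁, μ i₁ ≠ 0 := by
      by_contra hall
      push_neg at hall
      apply hd0
      rw [← hμa]
      simp [hall]
    have hi01 : i₁ ≠ i₀ := fun he => hμ1 (by rw [he, hμ0])
    have hcpz : ∀ j, cp j i₀ = 0 ∧ cm j i₀ = 0 := by
      intro j
      have hk := hkeyP j i₀
      rw [hμ0] at hk
      simp only [Int.cast_zero, mul_zero] at hk
      have hsum0 : (cp j i₀ : ℚ) + (cm j i₀ : ℚ) = 0 := by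
        rcases mul_eq_zero.mp hk with hc | hc
        · exact absurd hc hdq
        · exact hc
      have h1 : (0:ℚ) ≤ (cp j i₀ : ℚ) := Nat.cast_nonneg _
      have h2 : (0:ℚ) ≤ (cm j i₀ : ℚ) := Nat.cast_nonneg _
      constructor
      · exact_mod_cast (by linarith : (cp j i₀ : ℚ) = 0)
      · exact_mod_cast (by linarith : (cm j i₀ : ℚ) = 0)
    set P : Matrix (Fin n) (Fin n) ℤ :=
      Matrix.of (fun jj m : Fin n => ∑ i, (cp jj i : ℤ) * b i m) with hP
    have hPdet : P.det ≠ 0 := by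
      apply det_ne_zero_of_int_rows
      intro t ht
      funext j
      refine hkind t ?_ j
      have hkp : ∀ jj, k' jj = ∑ m, (∑ i, (cp jj i : ℤ) * b i m) • kbar m :=
        fun jj => (hcpe jj).2
      calc ∑ jj, t jj • k' jj
          = ∑ jj, t jj • ∑ m, (∑ i, (cp jj i : ℤ) * b i m) • kbar m := by simp_rw [hkp]
        _ = ∑ m, (∑ jj, t jj * (∑ i, (cp jj i : ℤ) * b i m)) • kbar m := by
            simp_rw [Finset.smul_sum, smul_smul]
            rw [Finset.sum_comm]
            simp_rw [← Finset.sum_smul]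
        _ = 0 := by
            have hz : ∀ m, ∑ jj, t jj * (∑ i, (cp jj i : ℤ) * b i m) = 0 := fun m => by
              simpa [hP] using ht m
            simp [hz]
    set β : Fin (n+1) → (Fin n → ℚ) := fun i m => (b i m : ℚ) with hβ
    set T : Finset (Fin n → ℚ) := ((Finset.univ.erase i₀).erase i₁).image β with hT
    set W : Submodule ℚ (Fin n → ℚ) := Submodule.span ℚ (T : Set (Fin n → ℚ)) with hW
    have hrel : ∑ i, (μ i : ℚ) • β i = 0 := by
      funext m
      simp only [Finset.sum_apply, Pi.smul_apply, Pi.zero_apply, hβ, smul_eq_mul]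
      exact_mod_cast hμb m
    have hβW : ∀ i, i ≠ i₀ → β i ∈ W := by
      intro i hi
      by_cases hi1 : i = i₁
      · subst hi1
        rw [← Finset.add_sum_erase Finset.univ _ (Finset.mem_univ i)] at hrel
        have hmem : ((μ i : ℚ)) • β i = - ∑ i' ∈ Finset.univ.erase i, (μ i' : ℚ) • β i' :=
          eq_neg_of_add_eq_zero_left hrel
        have hmem2 : (∑ i' ∈ Finset.univ.erase i, (μ i' : ℚ) • β i') ∈ W := by
          refine Submodule.sum_mem _ fun i' hi' => ?_
          by_cases h0 : i' = i₀
          · subst h0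
            rw [hμ0]
            simp
          · refine Submodule.smul_mem _ _ (Submodule.subset_span ?_)
            refine Finset.mem_coe.mpr (Finset.mem_image.mpr ⟨i', ?_, rfl⟩)
            exact Finset.mem_erase.mpr ⟨(Finset.mem_erase.mp hi').1,
              Finset.mem_erase.mpr ⟨h0, Finset.mem_univ _⟩⟩
        have hβi : β i = (μ i : ℚ)⁻¹ • ((μ i : ℚ) • β i) := by
          rw [inv_smul_smul₀ (by exact_mod_cast hμ1)]
        rw [hβi, hmem]
        exact Submodule.smul_mem _ _ (Submodule.neg_mem _ hmem2)
      · refine Submodule.subset_span ?_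
        refine Finset.mem_coe.mpr (Finset.mem_image.mpr ⟨i, ?_, rfl⟩)
        exact Finset.mem_erase.mpr ⟨hi1, Finset.mem_erase.mpr ⟨hi, Finset.mem_univ _⟩⟩
    have hPqW : ∀ j, (fun m => (P j m : ℚ)) ∈ W := by
      intro j
      have hsum : (fun m => (P j m : ℚ)) = ∑ i, (cp j i : ℚ) • β i := by
        funext m
        simp only [Finset.sum_apply, Pi.smul_apply, hβ, smul_eq_mul, hP, Matrix.of_apply]
        push_cast
        rfl
      rw [hsum]
      refine Submodule.sum_mem _ fun i _ => ?_
      by_cases h0 : i = i₀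
      · subst h0
        rw [(hcpz j).1]
        simp
      · exact Submodule.smul_mem _ _ (hβW i h0)
    have hPd : LinearIndependent ℚ (fun j => (fun m => (P j m : ℚ))) := by
      have hmapdet : (P.map (Int.cast : ℤ → ℚ)).det = ((P.det : ℚ)) := by
        rw [show (Int.cast : ℤ → ℚ) = ⇑(Int.castRingHom ℚ) from rfl]
        exact (RingHom.map_det (Int.castRingHom ℚ) P).symm
      have hu : IsUnit (P.map (Int.cast : ℤ → ℚ)) := by
        rw [Matrix.isUnit_iff_isUnit_det, hmapdet]
        exact isUnit_iff_ne_zero.mpr (Int.cast_ne_zero.mpr hPdet)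
      exact Matrix.linearIndependent_rows_iff_isUnit.mpr hu
    let p' : Fin n → W := fun j => ⟨_, hPqW j⟩
    have hp'ind : LinearIndependent ℚ p' :=
      LinearIndependent.of_comp W.subtype hPd
    have hr1 : (n : Cardinal) ≤ Module.rank ℚ W := by
      simpa [Cardinal.mk_fin] using hp'ind.cardinal_le_rank
    have hr2 : Module.rank ℚ W ≤ (T.card : Cardinal) := rank_span_finset_le T
    have hcard : T.card ≤ n - 1 := by
      have h1 : T.card ≤ ((Finset.univ.erase i₀).erase i₁).card := Finset.card_image_le
      have hmem : i₁ ∈ Finset.univ.erase i₀ := Finset.mem_erase.mpr ⟨hi01, Finset.mem_univ _⟩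
      have h2 : ((Finset.univ.erase i₀).erase i₁).card = n - 1 := by
        rw [Finset.card_erase_of_mem hmem, Finset.card_erase_of_mem (Finset.mem_univ _),
          Finset.card_univ, Fintype.card_fin]
        omega
      omega

    have hn2 : (n : ℕ) ≤ T.card := by exact_mod_cast hr1.trans hr2
    omega
  -- sign analysis
  have hdμ : ∀ i, 0 < A.det * μ i := by
    intro i
    have hk := hkey0 i
    have hq : (0:ℚ) < (A.det : ℚ) * (μ i : ℚ) := by
      have hne : (A.det : ℚ) * (μ i : ℚ) ≠ 0 :=
        mul_ne_zero hdq (Int.cast_ne_zero.mpr (hμnz i))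
      by_contra hle
      push_neg at hle
      have hklt : (A.det : ℚ) * (μ i : ℚ) < 0 := lt_of_le_of_ne hle hne
      have hk2 : ((A.det : ℚ))^2 * (c0 i : ℚ)
          = (∑ i, (c0 i : ℚ) * (a i : ℚ)) * ((A.det : ℚ) * (μ i : ℚ)) := by
        have := congrArg (fun x => (A.det : ℚ) * x) hk
        rw [pow_two]
        linarith [this]
      have hc0nn : (0:ℚ) ≤ (c0 i : ℚ) := Nat.cast_nonneg _
      nlinarith [sq_nonneg ((A.det : ℚ)), hs0pos]
    exact_mod_cast hq
  -- final count
  have hfin : A.det * A.det = ∑ i, a i * (A.det * μ i) := by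
    calc A.det * A.det = A.det * ∑ i, μ i * a i := by rw [hμa]
      _ = ∑ i, a i * (A.det * μ i) := by
          rw [Finset.mul_sum]
          congr 1
          funext i
          ring
  have hge : (n + 1 : ℤ) ≤ ∑ i, a i * (A.det * μ i) := by
    have hterm : ∀ i ∈ Finset.univ, (1:ℤ) ≤ a i * (A.det * μ i) := fun i _ => by
      have h1 : 1 ≤ a i := hapos i
      have h2 : 1 ≤ A.det * μ i := hdμ i
      nlinarith
    calc (n + 1 : ℤ) = ∑ _i : Fin (n+1), (1:ℤ) := by simp
      _ ≤ _ := Finset.sum_le_sum hterm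
  by_contra hle
  push_neg at hle
  have habs : |A.det| * |A.det| ≤ 1 := by
    have h0 : 0 ≤ |A.det| := abs_nonneg _
    nlinarith
  rw [abs_mul_abs_self] at habs
  have hn1 : (1:ℤ) ≤ (n:ℤ) := by exact_mod_cast hn
  linarith
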